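/- arXiv:1807.07992 — 5 statements merged into one kernel-verified Lean document; each statement's English description precedes it below -/
import Mathlib

section
/- In the generalized distance matrix of the 7-cycle C_7 (with indeterminates x_0,…,x_6 on the diagonal and cyclic distances off-diagonal), the 3×3 submatrix with rows {0,1,2} and columns {4,5,6} has determinant 2, and the one with rows {1,2,4} and columns {3,5,6} has determinant 5; hence the ideal generated by all 3×3 minors of this matrix is the unit ideal of ℤ[x_0,…,x_6]. -/
open MvPolynomial

theorem stmt_2 (M : Matrix (Fin 7) (Fin 7) (MvPolynomial (Fin 7) ℤ))
    (hM : ∀ i j : Fin 7, M i j =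
      (if i = j then X i else 0) +
        C (min |(i : ℤ) - (j : ℤ)| (7 - |(i : ℤ) - (j : ℤ)|))) :
    (M.submatrix (![0, 1, 2] : Fin 3 → Fin 7) (![4, 5, 6] : Fin 3 → Fin 7)).det = 2 ∧
    (M.submatrix (![1, 2, 4] : Fin 3 → Fin 7) (![3, 5, 6] : Fin 3 → Fin 7)).det = 5 ∧
    Ideal.span {p : MvPolynomial (Fin 7) ℤ | ∃ (r c : Fin 3 → Fin 7),
      Function.Injective r ∧ Function.Injective c ∧ p = (M.submatrix r c).det} = ⊤ := by
  have h1 : (M.submatrix (![0, 1, 2] : Fin 3 → Fin 7) (![4, 5, 6] : Fin 3 → Fin 7)).det = 2 := by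
    rw [Matrix.det_fin_three]
    simp only [Matrix.submatrix_apply, hM, Matrix.cons_val]
    norm_num [show ((0:Fin 7):ℤ)=0 from rfl, show ((1:Fin 7):ℤ)=1 from rfl,
      show ((2:Fin 7):ℤ)=2 from rfl, show ((3:Fin 7):ℤ)=3 from rfl, show ((4:Fin 7):ℤ)=4 from rfl,
      show ((5:Fin 7):ℤ)=5 from rfl, show ((6:Fin 7):ℤ)=6 from rfl,
      show (0:Fin 7) ≠ 4 from by decide, show (1:Fin 7) ≠ 5 from by decide,
      show (2:Fin 7) ≠ 6 from by decide, show (1:Fin 7) ≠ 6 from by decide,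
      show (2:Fin 7) ≠ 5 from by decide, show (0:Fin 7) ≠ 5 from by decide,
      show (1:Fin 7) ≠ 4 from by decide, show (0:Fin 7) ≠ 6 from by decide,
      show (2:Fin 7) ≠ 4 from by decide]
  have h2 : (M.submatrix (![1, 2, 4] : Fin 3 → Fin 7) (![3, 5, 6] : Fin 3 → Fin 7)).det = 5 := by
    rw [Matrix.det_fin_three]
    simp only [Matrix.submatrix_apply, hM, Matrix.cons_val]
    norm_num [show ((0:Fin 7):ℤ)=0 from rfl, show ((1:Fin 7):ℤ)=1 from rfl,
      show ((2:Fin 7):ℤ)=2 from rfl, show ((3:Fin 7):ℤ)=3 from rfl, show ((4:Fin 7):ℤ)=4 from rfl,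
      show ((5:Fin 7):ℤ)=5 from rfl, show ((6:Fin 7):ℤ)=6 from rfl,
      show (1:Fin 7) ≠ 3 from by decide, show (1:Fin 7) ≠ 5 from by decide,
      show (1:Fin 7) ≠ 6 from by decide, show (2:Fin 7) ≠ 3 from by decide,
      show (2:Fin 7) ≠ 5 from by decide, show (2:Fin 7) ≠ 6 from by decide,
      show (4:Fin 7) ≠ 3 from by decide, show (4:Fin 7) ≠ 5 from by decide,
      show (4:Fin 7) ≠ 6 from by decide]
  refine ⟨h1, h2, ?_⟩
  rw [Ideal.eq_top_iff_one]
  have m1 : (2 : MvPolynomial (Fin 7) ℤ) ∈ Ideal.span {p : MvPolynomial (Fin 7) ℤ | ∃ (r c : Fin 3 → Fin 7),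
      Function.Injective r ∧ Function.Injective c ∧ p = (M.submatrix r c).det} :=
    Ideal.subset_span ⟨![0,1,2], ![4,5,6], by decide, by decide, h1.symm⟩
  have m2 : (5 : MvPolynomial (Fin 7) ℤ) ∈ Ideal.span {p : MvPolynomial (Fin 7) ℤ | ∃ (r c : Fin 3 → Fin 7),
      Function.Injective r ∧ Function.Injective c ∧ p = (M.submatrix r c).det} :=
    Ideal.subset_span ⟨![1,2,4], ![3,5,6], by decide, by decide, h2.symm⟩
  have h : (1 : MvPolynomial (Fin 7) ℤ) = 3 * 2 - 1 * 5 := by ring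
  rw [h]
  exact sub_mem (Ideal.mul_mem_left _ _ m1) (Ideal.mul_mem_left _ _ m2)
end

section
/- Consider the 5×5 matrix M over ℤ[u,v,x_1,x_2,x_3] given by M = [[u,2,2,2,1],[2,v,2,1,2],[2,2,x_1,1,1],[2,1,1,x_2,1],[1,2,1,1,x_3]]. The ideal of ℤ[u,v,x_1,x_2,x_3] generated by all 3×3 minors of M is the unit ideal. -/
open MvPolynomial

theorem stmt_3 :
    letI u : MvPolynomial (Fin 5) ℤ := X 0
    letI v : MvPolynomial (Fin 5) ℤ := X 1
    letI x₁ : MvPolynomial (Fin 5) ℤ := X 2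
    letI x₂ : MvPolynomial (Fin 5) ℤ := X 3
    letI x₃ : MvPolynomial (Fin 5) ℤ := X 4
    letI M : Matrix (Fin 5) (Fin 5) (MvPolynomial (Fin 5) ℤ) :=
      !![u, 2, 2, 2, 1;
         2, v, 2, 1, 2;
         2, 2, x₁, 1, 1;
         2, 1, 1, x₂, 1;
         1, 2, 1, 1, x₃]
    Ideal.span {p : MvPolynomial (Fin 5) ℤ | ∃ (r c : Fin 3 → Fin 5),
      Function.Injective r ∧ Function.Injective c ∧ p = (M.submatrix r c).det} = ⊤ := by
  rw [Ideal.eq_top_iff_one]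
  have h : (-1 : MvPolynomial (Fin 5) ℤ) ∈ Ideal.span {p : MvPolynomial (Fin 5) ℤ |
      ∃ (r c : Fin 3 → Fin 5), Function.Injective r ∧ Function.Injective c ∧
        p = ((!![X 0, 2, 2, 2, 1; 2, X 1, 2, 1, 2; 2, 2, X 2, 1, 1; 2, 1, 1, X 3, 1;
          1, 2, 1, 1, X 4] : Matrix (Fin 5) (Fin 5) (MvPolynomial (Fin 5) ℤ)).submatrix r c).det} := by
    apply Ideal.subset_span
    refine ⟨![1, 3, 4], ![0, 2, 3], by decide, by decide, ?_⟩
    rw [Matrix.det_fin_three]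
    simp [Matrix.det_fin_three, Matrix.submatrix_apply, Matrix.vecHead, Matrix.vecTail]
    ring
  simpa using neg_mem h
end

section
/- Let M be the 6×6 symmetric matrix from the G_{6,5} configuration: M = [[x_0,y_2,y_1,y_0,2,1],[y_2,x_1,2,2,1,2],[y_1,2,x_2,1,1,2],[y_0,2,1,x_3,1,2],[2,1,1,1,x_4,1],[1,2,2,2,1,x_5]]. If y_2 is specialized to either 2 or 3, then the ideal of the ambient polynomial ring generated by all 3×3 minors of M is the unit ideal. -/
open MvPolynomial

private lemma vec6_two {α : Type*} (a b c d e f : α) : ![a,b,c,d,e,f] 2 = c := rfl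
private lemma vec6_three {α : Type*} (a b c d e f : α) : ![a,b,c,d,e,f] 3 = d := rfl
private lemma vec6_four {α : Type*} (a b c d e f : α) : ![a,b,c,d,e,f] 4 = e := rfl
private lemma vec6_five {α : Type*} (a b c d e f : α) : ![a,b,c,d,e,f] 5 = f := rfl
private lemma vec3_two {α : Type*} (a b c : α) : ![a,b,c] 2 = c := rfl

theorem stmt_5 (t : ℤ) (ht : t = 2 ∨ t = 3) :
    letI x : Fin 6 → MvPolynomial (Fin 8) ℤ := fun i => X ⟨i, by omega⟩
    letI y : Fin 2 → MvPolynomial (Fin 8) ℤ := fun i => X ⟨6 + i, by omega⟩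
    letI M : Matrix (Fin 6) (Fin 6) (MvPolynomial (Fin 8) ℤ) :=
      !![x 0, C t, y 1, y 0, 2, 1;
         C t, x 1, 2, 2, 1, 2;
         y 1, 2, x 2, 1, 1, 2;
         y 0, 2, 1, x 3, 1, 2;
         2, 1, 1, 1, x 4, 1;
         1, 2, 2, 2, 1, x 5]
    Ideal.span {p : MvPolynomial (Fin 8) ℤ | ∃ (r c : Fin 3 → Fin 6),
      Function.Injective r ∧ Function.Injective c ∧ p = (M.submatrix r c).det} = ⊤ := by
  set x : Fin 6 → MvPolynomial (Fin 8) ℤ := fun i => X ⟨i, by omega⟩ with hx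
  set y : Fin 2 → MvPolynomial (Fin 8) ℤ := fun i => X ⟨6 + i, by omega⟩ with hy
  set M : Matrix (Fin 6) (Fin 6) (MvPolynomial (Fin 8) ℤ) :=
      !![x 0, C t, y 1, y 0, 2, 1;
         C t, x 1, 2, 2, 1, 2;
         y 1, 2, x 2, 1, 1, 2;
         y 0, 2, 1, x 3, 1, 2;
         2, 1, 1, 1, x 4, 1;
         1, 2, 2, 2, 1, x 5] with hM
  rcases ht with ht | ht
  · subst ht
    have hmem : (M.submatrix ![0, 2, 4] ![1, 3, 5]).det ∈
        {p : MvPolynomial (Fin 8) ℤ | ∃ (r c : Fin 3 → Fin 6),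
          Function.Injective r ∧ Function.Injective c ∧ p = (M.submatrix r c).det} :=
      ⟨![0, 2, 4], ![1, 3, 5], by decide, by decide, rfl⟩
    have h : (M.submatrix ![0, 2, 4] ![1, 3, 5]).det = -1 := by
      simp only [hM, hx, hy, Matrix.det_fin_three, Matrix.submatrix_apply,
        Matrix.cons_val_zero, Matrix.cons_val_one, Matrix.head_cons, Matrix.head_fin_const,
        vec6_two, vec6_three, vec6_four, vec6_five, vec3_two,
        map_ofNat, Matrix.of_apply]
      ring
    exact Ideal.eq_top_of_isUnit_mem _ (Ideal.subset_span hmem)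
      (h ▸ IsUnit.neg isUnit_one)
  · subst ht
    have hmem : (M.submatrix ![0, 2, 5] ![1, 3, 4]).det ∈
        {p : MvPolynomial (Fin 8) ℤ | ∃ (r c : Fin 3 → Fin 6),
          Function.Injective r ∧ Function.Injective c ∧ p = (M.submatrix r c).det} :=
      ⟨![0, 2, 5], ![1, 3, 4], by decide, by decide, rfl⟩
    have h : (M.submatrix ![0, 2, 5] ![1, 3, 4]).det = 1 := by
      simp only [hM, hx, hy, Matrix.det_fin_three, Matrix.submatrix_apply,
        Matrix.cons_val_zero, Matrix.cons_val_one, Matrix.head_cons, Matrix.head_fin_const,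
        vec6_two, vec6_three, vec6_four, vec6_five, vec3_two,
        map_ofNat, Matrix.of_apply]
      ring
    exact Ideal.eq_top_of_isUnit_mem _ (Ideal.subset_span hmem) (h ▸ isUnit_one)
end

section
/- Let M'' be the 8×8 symmetric matrix [[x_0,2,2,2,3,1,1,a],[2,x_1,2,2,1,3,1,b],[2,2,x_2,1,1,1,2,1],[2,2,1,x_3,1,1,2,d],[3,1,1,1,x_4,2,2,e],[1,3,1,1,2,x_5,2,f],[1,1,2,2,2,2,x_u,1],[a,b,1,d,e,f,1,x_v]] over the polynomial ring ℤ in the variables x_0,…,x_5,x_u,x_v,a,b,d,e,f. Then the ideal generated by all 3×3 minors of M'' is the unit ideal. -/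
open MvPolynomial

theorem stmt_16 :
    letI x : Fin 6 → MvPolynomial (Fin 13) ℤ := fun i => X ⟨i, by omega⟩
    letI xu : MvPolynomial (Fin 13) ℤ := X 6
    letI xv : MvPolynomial (Fin 13) ℤ := X 7
    letI a : MvPolynomial (Fin 13) ℤ := X 8
    letI b : MvPolynomial (Fin 13) ℤ := X 9
    letI d : MvPolynomial (Fin 13) ℤ := X 10
    letI e : MvPolynomial (Fin 13) ℤ := X 11
    letI f : MvPolynomial (Fin 13) ℤ := X 12
    letI M : Matrix (Fin 8) (Fin 8) (MvPolynomial (Fin 13) ℤ) :=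
      !![x 0, 2, 2, 2, 3, 1, 1, a;
         2, x 1, 2, 2, 1, 3, 1, b;
         2, 2, x 2, 1, 1, 1, 2, 1;
         2, 2, 1, x 3, 1, 1, 2, d;
         3, 1, 1, 1, x 4, 2, 2, e;
         1, 3, 1, 1, 2, x 5, 2, f;
         1, 1, 2, 2, 2, 2, xu, 1;
         a, b, 1, d, e, f, 1, xv]
    Ideal.span {p : MvPolynomial (Fin 13) ℤ | ∃ (r c : Fin 3 → Fin 8),
      Function.Injective r ∧ Function.Injective c ∧ p = (M.submatrix r c).det} = ⊤ := by
  show Ideal.span {p : MvPolynomial (Fin 13) ℤ | ∃ (r c : Fin 3 → Fin 8),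
      Function.Injective r ∧ Function.Injective c ∧ p = ((
      !![X 0, 2, 2, 2, 3, 1, 1, X 8;
         2, X 1, 2, 2, 1, 3, 1, X 9;
         2, 2, X 2, 1, 1, 1, 2, 1;
         2, 2, 1, X 3, 1, 1, 2, X 10;
         3, 1, 1, 1, X 4, 2, 2, X 11;
         1, 3, 1, 1, 2, X 5, 2, X 12;
         1, 1, 2, 2, 2, 2, X 6, 1;
         X 8, X 9, 1, X 10, X 11, X 12, 1, X 7] :
         Matrix (Fin 8) (Fin 8) (MvPolynomial (Fin 13) ℤ)).submatrix r c).det} = ⊤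
  set M : Matrix (Fin 8) (Fin 8) (MvPolynomial (Fin 13) ℤ) :=
      !![X 0, 2, 2, 2, 3, 1, 1, X 8;
         2, X 1, 2, 2, 1, 3, 1, X 9;
         2, 2, X 2, 1, 1, 1, 2, 1;
         2, 2, 1, X 3, 1, 1, 2, X 10;
         3, 1, 1, 1, X 4, 2, 2, X 11;
         1, 3, 1, 1, 2, X 5, 2, X 12;
         1, 1, 2, 2, 2, 2, X 6, 1;
         X 8, X 9, 1, X 10, X 11, X 12, 1, X 7] with hM
  set S : Set (MvPolynomial (Fin 13) ℤ) := {p : MvPolynomial (Fin 13) ℤ | ∃ (r c : Fin 3 → Fin 8),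
      Function.Injective r ∧ Function.Injective c ∧ p = (M.submatrix r c).det} with hS
  rw [Ideal.eq_top_iff_one]
  have mem : ∀ (r c : Fin 3 → Fin 8), Function.Injective r → Function.Injective c →
      (M.submatrix r c).det ∈ Ideal.span S := fun r c hr hc =>
    Ideal.subset_span ⟨r, c, hr, hc, rfl⟩
  have h0 := mem ![0,2,4] ![0,3,6] (by decide) (by decide)
  have h1 := mem ![0,1,2] ![0,1,4] (by decide) (by decide)
  have h2 := mem ![0,1,2] ![0,1,7] (by decide) (by decide)
  have h3 := mem ![0,1,2] ![0,3,4] (by decide) (by decide)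
  have h4 := mem ![0,1,6] ![0,1,7] (by decide) (by decide)
  have e0 : M.submatrix ![0,2,4] ![0,3,6] = !![X 0, 2, 1; 2, 1, 2; 3, 1, 2] := by
    funext i j; fin_cases i <;> fin_cases j <;> rfl
  have e1 : M.submatrix ![0,1,2] ![0,1,4] = !![X 0, 2, 3; 2, X 1, 1; 2, 2, 1] := by
    funext i j; fin_cases i <;> fin_cases j <;> rfl
  have e2 : M.submatrix ![0,1,2] ![0,1,7] = !![X 0, 2, X 8; 2, X 1, X 9; 2, 2, 1] := by
    funext i j; fin_cases i <;> fin_cases j <;> rfl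
  have e3 : M.submatrix ![0,1,2] ![0,3,4] = !![X 0, 2, 3; 2, 2, 1; 2, 1, 1] := by
    funext i j; fin_cases i <;> fin_cases j <;> rfl
  have e4 : M.submatrix ![0,1,6] ![0,1,7] = !![X 0, 2, X 8; 2, X 1, X 9; 1, 1, 1] := by
    funext i j; fin_cases i <;> fin_cases j <;> rfl
  have key : (1 : MvPolynomial (Fin 13) ℤ) =
      (M.submatrix ![0,1,2] ![0,1,4]).det + (M.submatrix ![0,1,2] ![0,1,7]).det
      + 2 * (M.submatrix ![0,1,2] ![0,3,4]).det + (M.submatrix ![0,1,6] ![0,1,7]).det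
      - (X 0 * X 1 - X 1 * X 8 - X 0 * X 9 - 2 * X 1 + 2 * X 8 + 2 * X 9 - 3)
        * (M.submatrix ![0,2,4] ![0,3,6]).det := by
    rw [e0, e1, e2, e3, e4]
    simp only [Matrix.det_fin_three, Matrix.cons_val', Matrix.cons_val_zero, Matrix.cons_val_one,
      Matrix.head_cons, Matrix.empty_val', Matrix.cons_val_fin_one, Matrix.head_fin_const,
      Matrix.cons_val_two, Matrix.tail_cons, Matrix.of_apply]
    ring
  rw [key]
  exact sub_mem (add_mem (add_mem (add_mem h1 h2) (Ideal.mul_mem_left _ 2 h3)) h4)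
    (Ideal.mul_mem_left _ _ h0)
end

section
/- Let M be the 7×7 symmetric matrix over ℤ[x_0,…,x_6,y_0,…,y_3]: M = [[x_0,1,y_3,y_2,2,2,1],[1,x_1,y_1,y_0,2,2,1],[y_3,y_1,x_2,2,1,1,2],[y_2,y_0,2,x_3,1,1,2],[2,2,1,1,x_4,2,1],[2,2,1,1,2,x_5,1],[1,1,2,2,1,1,x_6]]. Then 3 is in the ideal of ℤ[x_0,…,x_6,y_0,…,y_3] generated by the 3×3 minors of M, and for each choice of y_0,y_1,y_2,y_3 ∈ {2,3}, the ideal of ℤ[x_0,…,x_6] generated by the 3×3 minors of the specialized matrix is the unit ideal. -/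
open MvPolynomial

theorem stmt_17 :
    (letI x : Fin 7 → MvPolynomial (Fin 11) ℤ := fun i => X ⟨i, by omega⟩
     letI y : Fin 4 → MvPolynomial (Fin 11) ℤ := fun i => X ⟨7 + i, by omega⟩
     letI M : Matrix (Fin 7) (Fin 7) (MvPolynomial (Fin 11) ℤ) :=
       !![x 0, 1, y 3, y 2, 2, 2, 1;
          1, x 1, y 1, y 0, 2, 2, 1;
          y 3, y 1, x 2, 2, 1, 1, 2;
          y 2, y 0, 2, x 3, 1, 1, 2;
          2, 2, 1, 1, x 4, 2, 1;
          2, 2, 1, 1, 2, x 5, 1;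
          1, 1, 2, 2, 1, 1, x 6]
     (3 : MvPolynomial (Fin 11) ℤ) ∈
       Ideal.span {p : MvPolynomial (Fin 11) ℤ | ∃ (r c : Fin 3 → Fin 7),
         Function.Injective r ∧ Function.Injective c ∧ p = (M.submatrix r c).det}) ∧
    ∀ t₀ t₁ t₂ t₃ : ℤ, (t₀ = 2 ∨ t₀ = 3) → (t₁ = 2 ∨ t₁ = 3) →
      (t₂ = 2 ∨ t₂ = 3) → (t₃ = 2 ∨ t₃ = 3) →
      (letI x : Fin 7 → MvPolynomial (Fin 7) ℤ := fun i => X i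
       letI M : Matrix (Fin 7) (Fin 7) (MvPolynomial (Fin 7) ℤ) :=
         !![x 0, 1, C t₃, C t₂, 2, 2, 1;
            1, x 1, C t₁, C t₀, 2, 2, 1;
            C t₃, C t₁, x 2, 2, 1, 1, 2;
            C t₂, C t₀, 2, x 3, 1, 1, 2;
            2, 2, 1, 1, x 4, 2, 1;
            2, 2, 1, 1, 2, x 5, 1;
            1, 1, 2, 2, 1, 1, x 6]
       Ideal.span {p : MvPolynomial (Fin 7) ℤ | ∃ (r c : Fin 3 → Fin 7),
         Function.Injective r ∧ Function.Injective c ∧ p = (M.submatrix r c).det} = ⊤) := by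
  constructor
  ·
    apply Ideal.subset_span
    refine ⟨![0,2,4], ![1,5,6], by decide, by decide, ?_⟩
    have h : (3 : MvPolynomial (Fin 11) ℤ)
        = Matrix.det (!![1, 2, 1; X 8, 1, 2; 2, 2, 1] : Matrix (Fin 3) (Fin 3) (MvPolynomial (Fin 11) ℤ)) := by
      simp [Matrix.det_fin_three]; ring
    rw [h]
    congr 1
    ext i j
    fin_cases i <;> fin_cases j <;> rfl
  ·
    intro t₀ t₁ t₂ t₃ ht₀ ht₁ ht₂ ht₃
    set I := Ideal.span {p : MvPolynomial (Fin 7) ℤ | ∃ (r c : Fin 3 → Fin 7),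
           Function.Injective r ∧ Function.Injective c ∧ p =
             ((!![X 0, 1, C t₃, C t₂, 2, 2, 1;
              1, X 1, C t₁, C t₀, 2, 2, 1;
              C t₃, C t₁, X 2, 2, 1, 1, 2;
              C t₂, C t₀, 2, X 3, 1, 1, 2;
              2, 2, 1, 1, X 4, 2, 1;
              2, 2, 1, 1, 2, X 5, 1;
              1, 1, 2, 2, 1, 1, X 6] : Matrix (Fin 7) (Fin 7) (MvPolynomial (Fin 7) ℤ)).submatrix r c).det} with hI
    have h3 : (3 : MvPolynomial (Fin 7) ℤ) ∈ I := by
      apply Ideal.subset_span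
      refine ⟨![0,2,4], ![1,5,6], by decide, by decide, ?_⟩
      have h : (3 : MvPolynomial (Fin 7) ℤ)
          = Matrix.det (!![1, 2, 1; C t₁, 1, 2; 2, 2, 1] : Matrix (Fin 3) (Fin 3) (MvPolynomial (Fin 7) ℤ)) := by
        simp [Matrix.det_fin_three]; ring
      rw [h]; congr 1; ext i j; fin_cases i <;> fin_cases j <;> rfl
    have hv : (C (-5 + 2*t₁ + 2*t₂ - 2*t₁*t₂) : MvPolynomial (Fin 7) ℤ) ∈ I := by
      apply Ideal.subset_span
      refine ⟨![0,2,4], ![1,3,5], by decide, by decide, ?_⟩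
      have h : (C (-5 + 2*t₁ + 2*t₂ - 2*t₁*t₂) : MvPolynomial (Fin 7) ℤ)
          = Matrix.det (!![1, C t₂, 2; C t₁, 2, 1; 2, 1, 2] : Matrix (Fin 3) (Fin 3) (MvPolynomial (Fin 7) ℤ)) := by
        simp [Matrix.det_fin_three, map_add, map_sub, map_mul, map_neg, map_ofNat]; ring
      rw [h]; congr 1; ext i j; fin_cases i <;> fin_cases j <;> rfl
    rw [Ideal.eq_top_iff_one]
    rcases ht₁ with h1 | h1 <;> rcases ht₂ with h2 | h2 <;> subst h1 h2 <;> norm_num at hv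
    · have := I.add_mem (I.mul_mem_left 2 h3) (I.mul_mem_left (-1) hv)
      norm_num at this; exact this
    · have := I.add_mem (I.mul_mem_left (-2) h3) hv
      norm_num at this; exact this
    · have := I.add_mem (I.mul_mem_left (-2) h3) hv
      norm_num at this; exact this
    · have := I.add_mem (I.mul_mem_left 4 h3) (I.mul_mem_left (-1) hv)
      norm_num at this; exact this
end
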